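/- First-order nonsmooth data convergence of the exponential Euler method for a scalar linear problem: let a ≤ 0, let g : [0,T] → ℝ satisfy |g(t)| ≤ B and |g'(t)| ≤ B/t for 0 < t ≤ T, let u(t) = e^{ta}u₀ + ∫₀^t e^{(t−ξ)a} g(ξ) dξ and u_{n+1} = e^{τa} u_n + τ φ₁(τa) g(t_n) with u_0 = u₀. Then |u_n − u(t_n)| ≤ C τ (|log τ| + 1) for all n with t_n = nτ ≤ T, where C depends only on B and T. -/

import Mathlib

open Set

set_option maxHeartbeats 1000000

/-- `φ₁(z) = (e^z − 1)/z` for `z ≠ 0`, `φ₁(0) = 1`. -/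
noncomputable def phi1 (z : ℝ) : ℝ := if z = 0 then 1 else (Real.exp z - 1) / z

lemma phi1_integral (a τ s : ℝ) (hτ : 0 < τ) :
    (∫ ξ in s..(s + τ), Real.exp ((s + τ - ξ) * a)) = τ * phi1 (τ * a) := by
  by_cases ha : a = 0
  · simp [ha, phi1]
  · have hF : ∀ ξ ∈ Set.uIcc s (s + τ), HasDerivAt
        (fun ξ => -Real.exp ((s + τ - ξ) * a) / a) (Real.exp ((s + τ - ξ) * a)) ξ := by
      intro ξ _
      have h1 : HasDerivAt (fun ξ : ℝ => (s + τ - ξ) * a) (-a) ξ := by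
        simpa using ((hasDerivAt_id ξ).const_sub (s + τ)).mul_const a
      have h2 := (h1.exp).neg.div_const a
      rw [mul_neg, neg_neg, mul_div_assoc, div_self ha, mul_one] at h2
      exact h2
    have hint : IntervalIntegrable (fun ξ => Real.exp ((s + τ - ξ) * a))
        MeasureTheory.volume s (s + τ) := by
      apply Continuous.intervalIntegrable
      exact Real.continuous_exp.comp (by continuity)
    rw [intervalIntegral.integral_eq_sub_of_hasDerivAt hF hint]
    have hτa : τ * a ≠ 0 := mul_ne_zero (ne_of_gt hτ) ha
    simp only [phi1, if_neg hτa]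
    have : s + τ - (s + τ) = 0 := by ring
    rw [this]
    have : (s + τ - s) * a = τ * a := by ring
    rw [this]
    field_simp
    ring
    simp

theorem exp_euler_nonsmooth_convergence (B T : ℝ) (hB : 0 ≤ B) (hT : 0 < T) :
    ∃ C > 0, ∀ (a τ u₀ : ℝ) (g g' : ℝ → ℝ),
      a ≤ 0 → 0 < τ → τ < 1 →
      (∀ t ∈ Set.Icc (0:ℝ) T, HasDerivAt g (g' t) t) →
      (∀ t ∈ Set.Icc (0:ℝ) T, |g t| ≤ B) →
      (∀ t ∈ Set.Ioc (0:ℝ) T, |g' t| ≤ B / t) →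
      ∀ uex : ℝ → ℝ, (∀ t, uex t = Real.exp (t * a) * u₀ +
          ∫ ξ in (0:ℝ)..t, Real.exp ((t - ξ) * a) * g ξ) →
      ∀ un : ℕ → ℝ, un 0 = u₀ →
      (∀ n : ℕ, un (n + 1) =
        Real.exp (τ * a) * un n + τ * phi1 (τ * a) * g ((n : ℝ) * τ)) →
      ∀ n : ℕ, (n : ℝ) * τ ≤ T →
        |un n - uex ((n : ℝ) * τ)| ≤ C * τ * (|Real.log τ| + 1) := by
  refine ⟨1 + 3 * B + B * |Real.log T|, by positivity, ?_⟩
  intro a τ u₀ g g' ha hτ hτ1 hg hgB hg' uex huex un hun0 hrec n hnT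
  -- continuity of g on [0,T]
  have hgc : ContinuousOn g (Set.Icc 0 T) := fun t ht =>
    (hg t ht).continuousAt.continuousWithinAt
  -- integrability of the integrand on subintervals of [0,T]
  have hInt : ∀ c p q : ℝ, 0 ≤ p → p ≤ q → q ≤ T →
      IntervalIntegrable (fun ξ => Real.exp ((c - ξ) * a) * g ξ)
        MeasureTheory.volume p q := by
    intro c p q hp hpq hq
    apply ContinuousOn.intervalIntegrable
    apply ContinuousOn.mul
    · exact (Real.continuous_exp.comp (by continuity)).continuousOn
    · exact hgc.mono (by rw [Set.uIcc_of_le hpq]; exact Set.Icc_subset_Icc hp hq)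
  -- per-step local error
  set d : ℕ → ℝ := fun k => if k = 0 then 2 * B * τ else B * τ / k with hd
  -- one-step error recurrence
  have key : ∀ m : ℕ, ((m : ℝ) + 1) * τ ≤ T →
      |un (m + 1) - uex (((m : ℝ) + 1) * τ)| ≤
        |un m - uex ((m : ℝ) * τ)| + d m := by
    intro m hmT
    set s : ℝ := (m : ℝ) * τ with hs
    have hs0 : 0 ≤ s := by positivity
    have hsτT : s + τ ≤ T := by rw [hs]; nlinarith
    have hsT : s ≤ T := by linarith
    -- exact solution recurrence
    have hsplit : (∫ ξ in (0:ℝ)..(s + τ), Real.exp ((s + τ - ξ) * a) * g ξ)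
        = (∫ ξ in (0:ℝ)..s, Real.exp ((s + τ - ξ) * a) * g ξ)
          + ∫ ξ in s..(s + τ), Real.exp ((s + τ - ξ) * a) * g ξ :=
      (intervalIntegral.integral_add_adjacent_intervals
        (hInt _ _ _ le_rfl hs0 hsT) (hInt _ _ _ hs0 (by linarith) hsτT)).symm
    have hpull : Real.exp (τ * a) * ∫ ξ in (0:ℝ)..s, Real.exp ((s - ξ) * a) * g ξ
        = ∫ ξ in (0:ℝ)..s, Real.exp ((s + τ - ξ) * a) * g ξ := by
      rw [← intervalIntegral.integral_const_mul]
      apply intervalIntegral.integral_congr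
      intro ξ _
      simp only
      rw [← mul_assoc, ← Real.exp_add]
      ring_nf
    have huexrec : uex (s + τ) = Real.exp (τ * a) * uex s
        + ∫ ξ in s..(s + τ), Real.exp ((s + τ - ξ) * a) * g ξ := by
      rw [huex (s + τ), huex s, hsplit, mul_add, ← mul_assoc, ← Real.exp_add, hpull,
        show (s + τ) * a = τ * a + s * a by ring]
      abel
    -- numerical step in integral form
    have hphi : τ * phi1 (τ * a) * g s
        = ∫ ξ in s..(s + τ), Real.exp ((s + τ - ξ) * a) * g s := by
      rw [intervalIntegral.integral_mul_const, phi1_integral a τ s hτ]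
    have hcast : ((m : ℝ) + 1) * τ = s + τ := by rw [hs]; ring
    have herr : un (m + 1) - uex (((m : ℝ) + 1) * τ)
        = Real.exp (τ * a) * (un m - uex s)
          - ∫ ξ in s..(s + τ), Real.exp ((s + τ - ξ) * a) * (g ξ - g s) := by
      have hsub : (∫ ξ in s..(s + τ), Real.exp ((s + τ - ξ) * a) * (g ξ - g s))
          = (∫ ξ in s..(s + τ), Real.exp ((s + τ - ξ) * a) * g ξ)
            - ∫ ξ in s..(s + τ), Real.exp ((s + τ - ξ) * a) * g s := by
        rw [← intervalIntegral.integral_sub (hInt _ _ _ hs0 (by linarith) hsτT)]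
        · apply intervalIntegral.integral_congr; intro ξ _; ring
        · apply Continuous.intervalIntegrable
          exact (Real.continuous_exp.comp (by continuity)).mul continuous_const
      rw [hcast, huexrec, hrec m, hsub, ← hs, hphi]
      ring
    rw [herr]
    have hexp1 : Real.exp (τ * a) ≤ 1 := by
      rw [show (1:ℝ) = Real.exp 0 by simp]
      exact Real.exp_le_exp.mpr (by nlinarith)
    have hterm1 : |Real.exp (τ * a) * (un m - uex s)| ≤ |un m - uex s| := by
      rw [abs_mul, abs_of_pos (Real.exp_pos _)]
      nlinarith [abs_nonneg (un m - uex s)]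
    -- bound the local error integral
    have hδ : |∫ ξ in s..(s + τ), Real.exp ((s + τ - ξ) * a) * (g ξ - g s)| ≤ d m := by
      rcases Nat.eq_zero_or_pos m with hm | hm
      · -- m = 0 : crude bound 2Bτ
        have hb : ∀ ξ ∈ Set.uIoc s (s + τ),
            ‖Real.exp ((s + τ - ξ) * a) * (g ξ - g s)‖ ≤ 2 * B := by
          intro ξ hξ
          rw [Set.uIoc_of_le (by linarith)] at hξ
          have hξ1 : s < ξ := hξ.1
          have hξ2 : ξ ≤ s + τ := hξ.2
          have he : Real.exp ((s + τ - ξ) * a) ≤ 1 := by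
            rw [show (1:ℝ) = Real.exp 0 by simp]
            exact Real.exp_le_exp.mpr (by nlinarith)
          have h1 : |g ξ| ≤ B := hgB ξ ⟨by linarith, by linarith⟩
          have h2 : |g s| ≤ B := hgB s ⟨hs0, hsT⟩
          rw [Real.norm_eq_abs, abs_mul, abs_of_pos (Real.exp_pos _)]
          calc Real.exp ((s + τ - ξ) * a) * |g ξ - g s| ≤ 1 * |g ξ - g s| := by
                nlinarith [abs_nonneg (g ξ - g s)]
            _ ≤ 2 * B := by rw [one_mul]; calc |g ξ - g s| ≤ |g ξ| + |g s| := abs_sub _ _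
                              _ ≤ 2 * B := by linarith
        have := intervalIntegral.norm_integral_le_of_norm_le_const hb
        have hdm : d m = 2 * B * τ := by simp [hd, hm]
        rw [hdm]
        calc |∫ ξ in s..(s + τ), Real.exp ((s + τ - ξ) * a) * (g ξ - g s)|
            ≤ 2 * B * |s + τ - s| := this
          _ = 2 * B * τ := by rw [show s + τ - s = τ by ring, abs_of_pos hτ]
      · -- m ≥ 1 : use derivative bound B/s
        have hspos : 0 < s := by
          rw [hs]; have : (1:ℝ) ≤ (m:ℝ) := by exact_mod_cast hm
          nlinarith
        have hMVT : ∀ ξ ∈ Set.Icc s (s + τ), |g ξ - g s| ≤ B / s * τ := by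
          intro ξ hξ
          have hlip : ‖g ξ - g s‖ ≤ B / s * ‖ξ - s‖ := by
            apply Convex.norm_image_sub_le_of_norm_hasDerivWithin_le
              (f' := g') (s := Set.Icc s (s + τ))
            · intro x hx
              exact (hg x ⟨by linarith [hx.1], by linarith [hx.2]⟩).hasDerivWithinAt
            · intro x hx
              have hx1 : s ≤ x := hx.1
              have hx2 : x ≤ s + τ := hx.2
              have := hg' x ⟨by linarith, by linarith⟩
              rw [Real.norm_eq_abs]
              calc |g' x| ≤ B / x := this
                _ ≤ B / s := by
                    apply div_le_div_of_nonneg_left hB hspos hx1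
            · exact convex_Icc _ _
            · exact ⟨le_rfl, by linarith⟩
            · exact hξ
          rw [Real.norm_eq_abs, Real.norm_eq_abs] at hlip
          calc |g ξ - g s| ≤ B / s * |ξ - s| := hlip
            _ ≤ B / s * τ := by
                apply mul_le_mul_of_nonneg_left _ (by positivity)
                rw [abs_of_nonneg (by linarith [hξ.1])]
                linarith [hξ.2]
        have hb : ∀ ξ ∈ Set.uIoc s (s + τ),
            ‖Real.exp ((s + τ - ξ) * a) * (g ξ - g s)‖ ≤ B / s * τ := by
          intro ξ hξ
          rw [Set.uIoc_of_le (by linarith)] at hξ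
          have he : Real.exp ((s + τ - ξ) * a) ≤ 1 := by
            rw [show (1:ℝ) = Real.exp 0 by simp]
            exact Real.exp_le_exp.mpr (by nlinarith [hξ.1, hξ.2])
          rw [Real.norm_eq_abs, abs_mul, abs_of_pos (Real.exp_pos _)]
          have := hMVT ξ ⟨le_of_lt hξ.1, hξ.2⟩
          nlinarith [abs_nonneg (g ξ - g s), Real.exp_pos ((s + τ - ξ) * a)]
        have := intervalIntegral.norm_integral_le_of_norm_le_const hb
        have hdm : d m = B * τ / m := by simp [hd, Nat.pos_iff_ne_zero.mp hm]
        rw [hdm]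
        calc |∫ ξ in s..(s + τ), Real.exp ((s + τ - ξ) * a) * (g ξ - g s)|
            ≤ B / s * τ * |s + τ - s| := this
          _ = B / s * τ * τ := by rw [show s + τ - s = τ by ring, abs_of_pos hτ]
          _ = B * τ / m := by
              rw [hs]; field_simp
    calc |Real.exp (τ * a) * (un m - uex s)
          - ∫ ξ in s..(s + τ), Real.exp ((s + τ - ξ) * a) * (g ξ - g s)|
        ≤ |Real.exp (τ * a) * (un m - uex s)|
          + |∫ ξ in s..(s + τ), Real.exp ((s + τ - ξ) * a) * (g ξ - g s)| :=
          abs_sub _ _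
      _ ≤ |un m - uex s| + d m := add_le_add hterm1 hδ
  -- cumulative error bound
  have main : ∀ k : ℕ, (k : ℝ) * τ ≤ T →
      |un k - uex ((k : ℝ) * τ)| ≤ ∑ i ∈ Finset.range k, d i := by
    intro k
    induction k with
    | zero =>
      intro _
      have : uex ((0:ℕ) * τ) = u₀ := by
        rw [Nat.cast_zero, zero_mul, huex 0]
        simp
      rw [this, hun0]
      simp
    | succ m ih =>
      intro hk
      have hk' : ((m : ℝ) + 1) * τ ≤ T := by push_cast at hk ⊢; linarith
      have hmT : (m : ℝ) * τ ≤ T := by nlinarith [(Nat.cast_nonneg m : (0:ℝ) ≤ (m:ℝ))]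
      have h1 := key m hk'
      have h2 := ih hmT
      rw [Finset.sum_range_succ]
      have : ((m + 1 : ℕ) : ℝ) = (m : ℝ) + 1 := by push_cast; ring
      rw [this]
      linarith
  have hsum := main n hnT
  -- bound the sum by harmonic numbers
  have hsum2 : (∑ i ∈ Finset.range n, d i) ≤ 2 * B * τ + B * τ * (harmonic n : ℝ) := by
    rcases Nat.eq_zero_or_pos n with hn | hn
    · subst hn; simp; positivity
    · obtain ⟨m, rfl⟩ := Nat.exists_eq_succ_of_ne_zero (Nat.pos_iff_ne_zero.mp hn)
      rw [Finset.sum_range_succ' d m]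
      have h0 : d 0 = 2 * B * τ := by rw [hd]; simp
      have hterm : ∀ i ∈ Finset.range m, d (i + 1) = B * τ * ((i : ℝ) + 1)⁻¹ := by
        intro i _
        rw [hd]; simp
        push_cast
        ring
      rw [h0, Finset.sum_congr rfl hterm, ← Finset.mul_sum]
      have hH : (harmonic m : ℝ) = ∑ i ∈ Finset.range m, ((i : ℝ) + 1)⁻¹ := by
        rw [harmonic]
        push_cast
        exact Finset.sum_congr rfl fun i _ => by ring
      have hmono : (harmonic m : ℝ) ≤ (harmonic (m + 1) : ℝ) := by
        rw [harmonic_succ]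
        push_cast
        have : (0:ℝ) ≤ ((m:ℝ) + 1)⁻¹ := by positivity
        linarith
      rw [← hH]
      have hBτ : (0:ℝ) ≤ B * τ := by positivity
      nlinarith [mul_le_mul_of_nonneg_left hmono hBτ]
  -- bound harmonic n by logs
  have hfinal : 2 * B * τ + B * τ * (harmonic n : ℝ)
      ≤ (1 + 3 * B + B * |Real.log T|) * τ * (|Real.log τ| + 1) := by
    rcases Nat.eq_zero_or_pos n with hn | hn
    · subst hn
      simp only [harmonic_zero, Rat.cast_zero, mul_zero, add_zero]
      have h1 : 0 ≤ |Real.log τ| := abs_nonneg _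
      have h2 : 0 ≤ |Real.log T| := abs_nonneg _
      nlinarith [mul_nonneg (mul_nonneg hB hτ.le) h1, mul_nonneg (mul_nonneg h2 hτ.le) h1,
        mul_nonneg hτ.le h1, mul_nonneg (mul_nonneg hB h2) hτ.le, mul_nonneg hB hτ.le,
        mul_nonneg h2 hτ.le, mul_nonneg (mul_nonneg (mul_nonneg hB h2) hτ.le) h1]
    · have hn1 : (1:ℝ) ≤ (n:ℝ) := by exact_mod_cast hn
      have hnτ : (n:ℝ) ≤ T / τ := by
        rw [le_div_iff₀ hτ]; linarith [hnT]
      have hlogn : Real.log n ≤ |Real.log T| + |Real.log τ| := by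
        calc Real.log n ≤ Real.log (T / τ) := Real.log_le_log (by linarith) hnτ
          _ = Real.log T - Real.log τ := Real.log_div (by linarith) (ne_of_gt hτ)
          _ ≤ |Real.log T| + |Real.log τ| := by
              have := le_abs_self (Real.log T)
              have := neg_le_abs (Real.log τ)
              linarith
      have hH := harmonic_le_one_add_log n
      have h1 : 0 ≤ |Real.log τ| := abs_nonneg _
      have h2 : 0 ≤ |Real.log T| := abs_nonneg _
      have h3 : (harmonic n : ℝ) ≤ 1 + |Real.log T| + |Real.log τ| := by linarith
      have h4 : (0:ℝ) ≤ (harmonic n : ℝ) := by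
        have := harmonic_pos (Nat.pos_iff_ne_zero.mp hn)
        exact_mod_cast le_of_lt this
      have hkey := mul_le_mul_of_nonneg_left h3 (mul_nonneg hB hτ.le)
      nlinarith [hkey, mul_nonneg hτ.le h1, mul_nonneg (mul_nonneg hB hτ.le) h1,
        mul_nonneg (mul_nonneg (mul_nonneg hB h2) hτ.le) h1, mul_nonneg hB hτ.le,
        mul_nonneg (mul_nonneg hB h2) hτ.le]
  linarith
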